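/- arXiv:1002.0733 — 2 statements merged into one kernel-verified Lean document; each statement's English description precedes it below -/
import Mathlib

section
/- Orthogonality relations forced by the isometry condition for extremal operations: let d, n ≥ 1, let E be a complex inner product space, and let M : Fin n → Matrix (Fin d) (Fin d) ℂ be such that ∑ i, (M i)ᴴ * M i = 1 and the family of n² matrices ((M i)ᴴ * M j) for (i, j) : Fin n × Fin n is linearly independent. Let L : Fin n → (E →ₗ[ℂ] E), and define U : (Fin d → E) →ₗ[ℂ] (Fin d → E) by (U x) a = ∑ b, ∑ i, (M i a b) • (L i) (x b). Equip Fin d → E with the inner product ⟪x, y⟫ = ∑ a, ⟪x a, y a⟫ (i.e. PiLp 2). If ⟪U x, U y⟫ = ⟪x, y⟫ for all x y : Fin d → E, then for all i j : Fin n and all u v : E, ⟪(L i) u, (L j) v⟫ = (if i = j then 1 else 0) * ⟪u, v⟫. -/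
open Matrix

/-- Orthogonality relations forced by the isometry condition for
extremal operations. -/
theorem isometry_forces_orthogonality
    {E : Type*} [NormedAddCommGroup E] [InnerProductSpace ℂ E]
    (d n : ℕ) (hd : 1 ≤ d) (hn : 1 ≤ n)
    (M : Fin n → Matrix (Fin d) (Fin d) ℂ)
    (hcomp : ∑ i, (M i)ᴴ * M i = 1)
    (hlin : LinearIndependent ℂ (fun p : Fin n × Fin n => (M p.1)ᴴ * M p.2))
    (L : Fin n → (E →ₗ[ℂ] E))
    (U : (Fin d → E) →ₗ[ℂ] (Fin d → E))
    (hUdef : ∀ (x : Fin d → E) (a : Fin d), U x a = ∑ b : Fin d, ∑ i, M i a b • L i (x b))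
    (hUiso : ∀ x y : Fin d → E,
      ∑ a, (inner ℂ (U x a) (U y a) : ℂ) = ∑ a, (inner ℂ (x a) (y a) : ℂ)) :
    ∀ (i j : Fin n) (u v : E),
      (inner ℂ (L i u) (L j v) : ℂ) = (if i = j then 1 else 0) * (inner ℂ u v : ℂ) := by
  intro i j u v
  set c : Fin n × Fin n → ℂ :=
    fun p => (inner ℂ (L p.1 u) (L p.2 v) : ℂ)
      - (if p.1 = p.2 then 1 else 0) * (inner ℂ u v : ℂ) with hc
  have key : ∀ p, c p = 0 := by
    rw [Fintype.linearIndependent_iff] at hlin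
    apply hlin
    ext b b'
    have h := hUiso (Pi.single b u) (Pi.single b' v)
    have hU : ∀ (w : E) (bb a : Fin d),
        U (Pi.single bb w) a = ∑ k, M k a bb • L k w := by
      intro w bb a
      rw [hUdef]
      rw [Finset.sum_eq_single bb]
      · simp
      · intro b2 _ hb2
        simp [Pi.single_eq_of_ne hb2]
      · simp
    have hl : ∑ a, (inner ℂ (U (Pi.single b u) a) (U (Pi.single b' v) a) : ℂ)
        = ∑ p : Fin n × Fin n,
            (inner ℂ (L p.1 u) (L p.2 v) : ℂ) * ((M p.1)ᴴ * M p.2) b b' := by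
      have step : ∀ a : Fin d,
          (inner ℂ (U (Pi.single b u) a) (U (Pi.single b' v) a) : ℂ)
          = ∑ p : Fin n × Fin n,
              (inner ℂ (L p.1 u) (L p.2 v) : ℂ)
                * ((starRingEnd ℂ) (M p.1 a b) * M p.2 a b') := by
        intro a
        rw [hU, hU, Fintype.sum_prod_type]
        simp only [sum_inner, inner_sum, inner_smul_left, inner_smul_right,
          Finset.mul_sum]
        rw [Finset.sum_comm]
        apply Finset.sum_congr rfl
        intro k _
        apply Finset.sum_congr rfl
        intro k' _
        ring
      rw [Finset.sum_congr rfl (fun a _ => step a), Finset.sum_comm]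
      apply Finset.sum_congr rfl
      intro p _
      rw [Matrix.mul_apply, Finset.mul_sum]
      apply Finset.sum_congr rfl
      intro a _
      simp [Matrix.conjTranspose_apply, RCLike.star_def]
    have hL0 : ∑ a, (inner ℂ ((Pi.single b u : Fin d → E) a) ((Pi.single b' v : Fin d → E) a) : ℂ)
        = ((1 : Matrix (Fin d) (Fin d) ℂ) b b') * (inner ℂ u v : ℂ) := by
      rcases eq_or_ne b b' with rfl | hbb
      · rw [Matrix.one_apply_eq, one_mul]
        have hstep : ∀ a : Fin d, (inner ℂ ((Pi.single b u : Fin d → E) a) ((Pi.single b v : Fin d → E) a) : ℂ)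
            = if a = b then (inner ℂ u v : ℂ) else 0 := by
          intro a
          rcases eq_or_ne a b with rfl | ha
          · simp
          · simp [Pi.single_eq_of_ne ha, ha]
        simp [hstep]
      · rw [Matrix.one_apply_ne hbb, zero_mul]
        apply Finset.sum_eq_zero
        intro a _
        rcases eq_or_ne a b with rfl | ha
        · rw [Pi.single_eq_of_ne hbb, inner_zero_right]
        · rw [Pi.single_eq_of_ne ha, inner_zero_left]
    have hr : ∑ a, (inner ℂ ((Pi.single b u : Fin d → E) a) ((Pi.single b' v : Fin d → E) a) : ℂ)
        = ∑ p : Fin n × Fin n, ((if p.1 = p.2 then 1 else 0) * (inner ℂ u v : ℂ))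
            * ((M p.1)ᴴ * M p.2) b b' := by
      rw [hL0, ← hcomp]
      simp only [Matrix.sum_apply]
      rw [Finset.sum_mul, Fintype.sum_prod_type]
      apply Finset.sum_congr rfl
      intro k _
      rw [Finset.sum_eq_single k]
      · simp [mul_comm]
      · intro k' _ hk'
        simp [Ne.symm hk']
      · simp
    rw [hl, hr] at h
    simp only [Matrix.sum_apply, Matrix.smul_apply, Matrix.zero_apply, smul_eq_mul, hc]
    rw [Finset.sum_congr rfl (fun p _ => sub_mul _ _ _), Finset.sum_sub_distrib, h, sub_self]
  have := key (i, j)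
  simp only [hc] at this
  exact sub_eq_zero.mp this
end

section
/- Heat transfer matrices satisfying Szilard's bound yield positive definite HTOs: let n ≥ 1, b > 0, and q : Matrix (Fin n) (Fin n) ℂ Hermitian with (Matrix.trace (exp (-b • q))).re < 1. Let A be a finite nonempty type and M : Fin n → Matrix A A ℂ with ∑ i, (M i)ᴴ * M i = 1. Then the Hermitian matrix Q = ∑ i, ∑ j, q i j • ((M i)ᴴ * M j) is positive definite. -/
open Matrix Kronecker
open scoped ComplexOrder

noncomputable section

/-- A density matrix: positive semidefinite with trace 1. -/
def IsDensityMatrix {ι : Type*} [Fintype ι] (ρ : Matrix ι ι ℂ) : Prop :=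
  ρ.PosSemidef ∧ ρ.trace = 1

/-- The matrix exponential. -/
noncomputable def mexp {ι : Type*} [Fintype ι] [DecidableEq ι] (M : Matrix ι ι ℂ) :
    Matrix ι ι ℂ :=
  NormedSpace.exp M

/-- Von Neumann entropy of a (Hermitian) matrix, via its eigenvalues. -/
noncomputable def vnEntropy {ι : Type*} [Fintype ι] [DecidableEq ι] (ρ : Matrix ι ι ℂ) : ℝ :=
  if h : ρ.IsHermitian then -∑ i, h.eigenvalues i * Real.log (h.eigenvalues i) else 0

/-- The Gibbs state of the Hamiltonian `H` at inverse temperature `b`. -/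
noncomputable def gibbs {ι : Type*} [Fintype ι] [DecidableEq ι] (H : Matrix ι ι ℂ) (b : ℝ) :
    Matrix ι ι ℂ :=
  (Matrix.trace (mexp (-b • H)))⁻¹ • mexp (-b • H)

/-- Equilibrium energy of the bath. -/
noncomputable def eqEnergy {ι : Type*} [Fintype ι] [DecidableEq ι] (H : Matrix ι ι ℂ) (b : ℝ) : ℝ :=
  (Matrix.trace (gibbs H b * H)).re

/-- Partial trace over the second (bath) factor. -/
def ptraceB {A B : Type*} [Fintype B] (M : Matrix (A × B) (A × B) ℂ) : Matrix A A ℂ :=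
  Matrix.of fun a a' => ∑ k : B, M (a, k) (a', k)

/-- Partial trace over the first (device) factor. -/
def ptraceA {A B : Type*} [Fintype A] (M : Matrix (A × B) (A × B) ℂ) : Matrix B B ℂ :=
  Matrix.of fun k k' => ∑ a : A, M (a, k) (a, k')

/-- The heat transfer operator of a realization setup. -/
noncomputable def hto {A B : Type*} [Fintype A] [DecidableEq A] [Fintype B] [DecidableEq B]
    (H_B : Matrix B B ℂ) (b : ℝ) (U : Matrix (A × B) (A × B) ℂ) : Matrix A A ℂ :=
  ptraceB (((1 : Matrix A A ℂ) ⊗ₖ gibbs H_B b) * Uᴴ * ((1 : Matrix A A ℂ) ⊗ₖ H_B) * U)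
    - eqEnergy H_B b • (1 : Matrix A A ℂ)

/-- Matrix logarithm of a Hermitian matrix through the continuous functional calculus. -/
noncomputable def mlog {ι : Type*} [Fintype ι] [DecidableEq ι] (ρ : Matrix ι ι ℂ) :
    Matrix ι ι ℂ :=
  if h : ρ.IsHermitian then h.cfc Real.log else 0

/-- Quantum relative entropy `S(σ‖ρ)`. -/
noncomputable def relEntropy {ι : Type*} [Fintype ι] [DecidableEq ι] (σ ρ : Matrix ι ι ℂ) : ℝ :=
  (Matrix.trace (σ * (mlog σ - mlog ρ))).re

end

open Matrix in
lemma posdef_of_trace_exp_lt (n : ℕ) (hn : 1 ≤ n) {b : ℝ} (hb : 0 < b)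
    (q : Matrix (Fin n) (Fin n) ℂ) (hq : q.IsHermitian)
    (hlt : (Matrix.trace (mexp (-b • q))).re < 1) : q.PosDef := by
  classical
  set U : Matrix (Fin n) (Fin n) ℂ := (hq.eigenvectorUnitary : Matrix (Fin n) (Fin n) ℂ) with hU
  have hUmem : U ∈ Matrix.unitaryGroup (Fin n) ℂ := (hq.eigenvectorUnitary).2
  have hU1 : U * star U = 1 := (Matrix.mem_unitaryGroup_iff).mp hUmem
  have hUinv : U⁻¹ = star U := Matrix.inv_eq_right_inv hU1
  have hU2 : star U * U = 1 := hUmem.1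
  have hUunit : IsUnit U := ⟨⟨U, star U, hU1, hU2⟩, rfl⟩
  have hdiag : -b • q = U * Matrix.diagonal (fun i => ((-b * hq.eigenvalues i : ℝ) : ℂ)) * U⁻¹ := by
    rw [hUinv]
    conv_lhs => rw [hq.spectral_theorem, Unitary.conjStarAlgAut_apply]
    rw [← Matrix.smul_mul, ← Matrix.mul_smul]
    congr 1
    congr 1
    ext i j
    by_cases h : i = j <;>
      simp [Matrix.diagonal, h, Complex.real_smul, Function.comp]
  have htr : (Matrix.trace (mexp (-b • q))).re = ∑ i, Real.exp (-b * hq.eigenvalues i) := by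
    rw [mexp, hdiag, Matrix.exp_conj U _ hUunit, Matrix.trace_mul_cycle,
      hUinv, hU2, Matrix.one_mul, Matrix.exp_diagonal,
      Matrix.trace_diagonal]
    rw [Complex.re_sum]
    refine Finset.sum_congr rfl fun i _ => ?_
    rw [Pi.coe_exp, ← Complex.exp_eq_exp_ℂ, ← Complex.ofReal_exp, Complex.ofReal_re]
  rw [htr] at hlt
  have heig : ∀ i, 0 < hq.eigenvalues i := by
    intro i
    have h1 : Real.exp (-b * hq.eigenvalues i) ≤ ∑ j, Real.exp (-b * hq.eigenvalues j) :=
      Finset.single_le_sum (f := fun j => Real.exp (-b * hq.eigenvalues j)) (fun j _ => (Real.exp_pos _).le) (Finset.mem_univ i)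
    have h2 : -b * hq.eigenvalues i < 0 := by
      have := lt_of_le_of_lt h1 hlt
      rwa [Real.exp_lt_one_iff] at this
    nlinarith
  have hsd : q.PosSemidef := hq.posSemidef_iff_eigenvalues_nonneg.mpr fun i => (heig i).le
  have hdet : q.det ≠ 0 := by
    rw [hq.det_eq_prod_eigenvalues]
    refine Finset.prod_ne_zero_iff.mpr fun i _ => ?_
    simpa using (heig i).ne'
  refine posDef_iff_dotProduct_mulVec.mpr ⟨hq, fun x hx => ?_⟩
  rcases lt_or_eq_of_le ((posSemidef_iff_dotProduct_mulVec.mp hsd).2 x) with h | h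
  · exact h
  · exfalso
    have h0 : q *ᵥ x = 0 := (hsd.dotProduct_mulVec_zero_iff x).mp h.symm
    have : x = 0 := by
      have hinj := Matrix.mulVec_injective_iff_isUnit.mpr (Matrix.isUnit_iff_isUnit_det _ |>.2 hdet.isUnit)
      exact hinj (by simpa using h0)
    exact hx this

lemma sum_mulVec' {ι A : Type*} [Fintype A] (s : Finset ι) (f : ι → Matrix A A ℂ)
    (x : A → ℂ) : (∑ i ∈ s, f i) *ᵥ x = ∑ i ∈ s, f i *ᵥ x := by
  induction s using Finset.cons_induction with
  | empty => simp
  | cons a s ha ih => simp [Matrix.add_mulVec, ih]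

lemma dotProduct_sum' {ι A : Type*} [Fintype A] (s : Finset ι) (v : A → ℂ)
    (f : ι → A → ℂ) : v ⬝ᵥ (∑ i ∈ s, f i) = ∑ i ∈ s, v ⬝ᵥ f i := by
  induction s using Finset.cons_induction with
  | empty => simp
  | cons a s ha ih => simp [dotProduct_add, ih]

lemma quad_eq {A : Type*} [Fintype A] {n : ℕ} (N P : Matrix A A ℂ) (x : A → ℂ) :
    star x ⬝ᵥ (Nᴴ * P) *ᵥ x = star (N *ᵥ x) ⬝ᵥ (P *ᵥ x) := by
  rw [star_mulVec, ← Matrix.dotProduct_mulVec, Matrix.mulVec_mulVec]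


/-- Heat transfer matrices satisfying Szilard's bound yield positive
definite HTOs. -/
theorem szilard_bound_implies_posdef
    (n : ℕ) (hn : 1 ≤ n) {b : ℝ} (hb : 0 < b)
    (q : Matrix (Fin n) (Fin n) ℂ) (hq : q.IsHermitian)
    (hlt : (Matrix.trace (mexp (-b • q))).re < 1)
    {A : Type*} [Fintype A] [DecidableEq A] [Nonempty A]
    (M : Fin n → Matrix A A ℂ) (hcomp : ∑ i, (M i)ᴴ * M i = 1) :
    (∑ i, ∑ j, q i j • ((M i)ᴴ * M j)).PosDef := by
  classical
  have hqpd : q.PosDef := posdef_of_trace_exp_lt n hn hb q hq hlt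
  rw [posDef_iff_dotProduct_mulVec]
  constructor
  · -- Hermitian
    unfold Matrix.IsHermitian
    rw [conjTranspose_sum]
    rw [Finset.sum_comm]
    refine Finset.sum_congr rfl fun j _ => ?_
    rw [conjTranspose_sum]
    refine Finset.sum_congr rfl fun i _ => ?_
    rw [conjTranspose_smul, conjTranspose_mul, conjTranspose_conjTranspose]
    congr 1
    exact hq.apply i j
  · intro x hx
    have key : star x ⬝ᵥ (∑ i, ∑ j, q i j • ((M i)ᴴ * M j)) *ᵥ x
        = ∑ a : A, star (fun i => (M i *ᵥ x) a) ⬝ᵥ q *ᵥ (fun i => (M i *ᵥ x) a) := by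
      calc star x ⬝ᵥ (∑ i, ∑ j, q i j • ((M i)ᴴ * M j)) *ᵥ x
          = ∑ i, ∑ j, q i j * (star (M i *ᵥ x) ⬝ᵥ (M j *ᵥ x)) := by
            simp only [sum_mulVec', dotProduct_sum', Matrix.smul_mulVec,
              dotProduct_smul, smul_eq_mul, quad_eq (n := n)]
        _ = ∑ i, ∑ j, ∑ a : A, star ((M i *ᵥ x) a) * (q i j * (M j *ᵥ x) a) := by
            refine Finset.sum_congr rfl fun i _ => Finset.sum_congr rfl fun j _ => ?_
            rw [dotProduct, Finset.mul_sum]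
            exact Finset.sum_congr rfl fun a _ => by simp only [Pi.star_apply]; ring
        _ = ∑ i, ∑ a : A, ∑ j, star ((M i *ᵥ x) a) * (q i j * (M j *ᵥ x) a) :=
            Finset.sum_congr rfl fun i _ => Finset.sum_comm
        _ = ∑ a : A, ∑ i, ∑ j, star ((M i *ᵥ x) a) * (q i j * (M j *ᵥ x) a) :=
            Finset.sum_comm
        _ = ∑ a : A, star (fun i => (M i *ᵥ x) a) ⬝ᵥ q *ᵥ (fun i => (M i *ᵥ x) a) := by
            refine Finset.sum_congr rfl fun a _ => ?_
            simp only [dotProduct, Matrix.mulVec, Pi.star_apply, Finset.mul_sum]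
    rw [key]
    -- find a with nonzero vector
    have hex : ∃ a : A, (fun i => (M i *ᵥ x) a) ≠ 0 := by
      by_contra h
      push_neg at h
      have hall : ∀ i, M i *ᵥ x = 0 := fun i => funext fun a => congrFun (h a) i
      have h1 : star x ⬝ᵥ x = 0 := by
        have := congrArg (fun N => star x ⬝ᵥ N *ᵥ x) hcomp
        simp only [sum_mulVec', dotProduct_sum', quad_eq (n := n), hall,
          Matrix.one_mulVec, dotProduct_zero, Finset.sum_const_zero] at this
        simpa using this.symm
      exact hx (dotProduct_star_self_eq_zero.mp h1)
    obtain ⟨a0, ha0⟩ := hex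
    refine Finset.sum_pos' (fun a _ => (posSemidef_iff_dotProduct_mulVec.mp hqpd.posSemidef).2 _) ⟨a0, Finset.mem_univ a0, (posDef_iff_dotProduct_mulVec.mp hqpd).2 ha0⟩
end
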